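/- arXiv:2107.06121 — 2 statements merged into one kernel-verified Lean document; each statement's English description precedes it below -/
import Mathlib

section
/- (Lemma 3.1(b)) If a hypergraph H is acyclic, then every maximum-weight spanning forest of the weighted hyperedge graph wg(H) is a join forest of H. -/
/-!
Lemma 3.1(a) (Bernstein–Goodman): a hypergraph `H` is acyclic iff the weight `w(H)`
equals the weight of a maximum-weight spanning forest of the weighted hyperedge
graph `wg(H)`.

A hypergraph on a finite vertex type `V` is given by its finite set `E` of
hyperedges, each a `Finset V`.
-/

variable {V : Type*} [Fintype V] [DecidableEq V]

/-- The degree of a vertex `v`: the number of hyperedges containing `v`. -/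
def hdeg (E : Finset (Finset V)) (v : V) : ℕ := (E.filter (fun e => v ∈ e)).card

/-- The weight of a hypergraph: the sum, over non-isolated vertices, of (degree − 1). -/
def hweight (E : Finset (Finset V)) : ℕ :=
  ∑ v ∈ Finset.univ.filter (fun v => 1 ≤ hdeg E v), (hdeg E v - 1)

/-- The weighted hyperedge graph `wg(H)`: nodes are the hyperedges, two distinct
hyperedges are adjacent iff they intersect.  (The weight of an edge `(e, f)` is
`(e ∩ f).card`, see `fweight`.) -/
def wg (E : Finset (Finset V)) : SimpleGraph (Finset V) where
  Adj e f := e ∈ E ∧ f ∈ E ∧ e ≠ f ∧ (e ∩ f).Nonempty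
  symm := ⟨fun e f ⟨he, hf, hne, hi⟩ => ⟨hf, he, hne.symm, by rwa [Finset.inter_comm] at hi⟩⟩
  loopless := ⟨fun e h => h.2.2.1 rfl⟩

/-- The weight `|e ∩ f|` of an (unordered) pair of hyperedges. -/
def interWt : Sym2 (Finset V) → ℕ :=
  Sym2.lift ⟨fun a b => (a ∩ b).card, fun a b => by simp [Finset.inter_comm]⟩

/-- The weight of a forest (or any graph) on hyperedges: the sum over its edges
of the size of the intersection of the two endpoints. -/
noncomputable def fweight (F : SimpleGraph (Finset V)) : ℕ :=
  ∑ p ∈ (Set.toFinite F.edgeSet).toFinset, interWt p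

/-- `S` is a spanning forest of `G`: an acyclic subgraph with the same connected
components (in particular it contains all nodes of `G`). -/
def IsSpanningForest (G S : SimpleGraph (Finset V)) : Prop :=
  S ≤ G ∧ S.IsAcyclic ∧ ∀ a b, S.Reachable a b ↔ G.Reachable a b

/-- `S` is a maximum-weight spanning forest of `G`. -/
def IsMaxSpanningForest (G S : SimpleGraph (Finset V)) : Prop :=
  IsSpanningForest G S ∧ ∀ S', IsSpanningForest G S' → fweight S' ≤ fweight S

/-- A forest whose node set is the set of hyperedges of the hypergraph `E`. -/
def IsForestOn (E : Finset (Finset V)) (F : SimpleGraph (Finset V)) : Prop :=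
  F.IsAcyclic ∧ ∀ e f, F.Adj e f → e ∈ E ∧ f ∈ E

/-- A join forest of the hypergraph `E`: a forest on the hyperedges such that any
two hyperedges sharing a vertex `v` are connected, and every node on the (unique)
path between them contains `v`. -/
def IsJoinForest (E : Finset (Finset V)) (J : SimpleGraph (Finset V)) : Prop :=
  IsForestOn E J ∧
  ∀ e ∈ E, ∀ f ∈ E, ∀ v ∈ e, v ∈ f →
    J.Reachable e f ∧ ∀ p : J.Walk e f, p.IsPath → ∀ g ∈ p.support, v ∈ g

/-- A hypergraph is acyclic iff it has a join forest. -/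
def IsAcyclicHypergraph (E : Finset (Finset V)) : Prop := ∃ J, IsJoinForest E J


/-! ### Auxiliary graph-theoretic lemmas -/

set_option linter.unusedSectionVars false

section AuxGraph

open SimpleGraph Finset

variable {α : Type*} [Fintype α] [DecidableEq α]

/-- The edge finset of a graph on a finite vertex type. -/
noncomputable def eF (G : SimpleGraph α) : Finset (Sym2 α) := (Set.toFinite G.edgeSet).toFinset

lemma mem_eF {G : SimpleGraph α} {p : Sym2 α} : p ∈ eF G ↔ p ∈ G.edgeSet :=
  Set.Finite.mem_toFinset _

lemma acyclic_anti {G H : SimpleGraph α} (h : G ≤ H) (hH : H.IsAcyclic) : G.IsAcyclic :=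
  fun _ c hc => hH (c.mapLe h) (hc.mapLe h)

lemma walk_support_prop {G : SimpleGraph α} {P : α → Prop}
    (hG : ∀ x y, G.Adj x y → P x ∧ P y) :
    ∀ {a b : α} (p : G.Walk a b), P a → ∀ z ∈ p.support, P z := by
  intro a b p
  induction p with
  | nil => intro ha z hz; simp only [SimpleGraph.Walk.support_nil, List.mem_singleton] at hz; rwa [hz]
  | cons h q ih =>
    intro ha z hz
    rw [SimpleGraph.Walk.support_cons, List.mem_cons] at hz
    rcases hz with rfl | hz
    · exact ha
    · exact ih (hG _ _ h).2 z hz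

lemma reach_transfer {G G' : SimpleGraph α} {P : α → Prop}
    (h : ∀ x y, G.Adj x y → P x → P y → G'.Adj x y) :
    ∀ {a b : α} (p : G.Walk a b), (∀ z ∈ p.support, P z) → G'.Reachable a b := by
  intro a b p
  induction p with
  | nil => intro _; rfl
  | cons had q ih =>
    intro hs
    have ha := hs _ (SimpleGraph.Walk.start_mem_support _)
    have hb := hs _ (by
      rw [SimpleGraph.Walk.support_cons]
      exact List.mem_cons_of_mem _ q.start_mem_support)
    refine (h _ _ had ha hb).reachable.trans (ih ?_)
    intro z hz
    exact hs z (by rw [SimpleGraph.Walk.support_cons]; exact List.mem_cons_of_mem _ hz)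

lemma reach_induce {G : SimpleGraph α} {T : Set α} :
    ∀ {a b : α} (p : G.Walk a b) (hs : ∀ z ∈ p.support, z ∈ T),
      (G.induce T).Reachable ⟨a, hs a p.start_mem_support⟩ ⟨b, hs b p.end_mem_support⟩ := by
  intro a b p
  induction p with
  | nil => intro _; rfl
  | @cons a c b had q ih =>
    intro hs
    have hq : ∀ z ∈ q.support, z ∈ T := fun z hz =>
      hs z (by rw [SimpleGraph.Walk.support_cons]; exact List.mem_cons_of_mem _ hz)
    have h1 : (G.induce T).Adj ⟨a, hs a (SimpleGraph.Walk.start_mem_support _)⟩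
        ⟨c, hq c q.start_mem_support⟩ := by
      simp only [comap_adj, Function.Embedding.coe_subtype]
      exact had
    exact h1.reachable.trans (by convert ih hq using 2)

/-- An acyclic graph whose edges lie within `T` and whose `T`-vertices are mutually
reachable has exactly `|T| - 1` edges. -/
lemma tree_count {G : SimpleGraph α} {T : Finset α} (hac : G.IsAcyclic)
    (hT : ∀ x y, G.Adj x y → x ∈ T ∧ y ∈ T) (hne : T.Nonempty)
    (hcon : ∀ a ∈ T, ∀ b ∈ T, G.Reachable a b) :
    (eF G).card + 1 = T.card := by
  classical
  set G' := G.induce (↑T : Set α) with hG'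
  letI : Fintype G'.edgeSet := (Set.toFinite _).fintype
  have htree : G'.IsTree := by
    refine ⟨?_, ?_⟩
    · rw [connected_iff]
      refine ⟨?_, ?_⟩
      · rintro ⟨x, hx⟩ ⟨y, hy⟩
        obtain ⟨p⟩ := hcon x (by simpa using hx) y (by simpa using hy)
        have hs : ∀ z ∈ p.support, z ∈ (↑T : Set α) := fun z hz => by
          exact_mod_cast walk_support_prop hT p (by simpa using hx) z hz
        exact reach_induce p hs
      · exact ⟨⟨hne.choose, by simpa using hne.choose_spec⟩⟩
    · intro v c hc
      exact hac (c.map (Embedding.induce (G := G) (↑T : Set α)).toHom)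
        (hc.map (Embedding.induce (G := G) (↑T : Set α)).injective)
  have hcard := htree.card_edgeFinset
  have hTc : Fintype.card (↑T : Set α) = T.card := by simp
  rw [hTc] at hcard
  rw [← hcard]
  congr 1
  refine (Finset.card_bij (fun p _ => Sym2.map Subtype.val p) ?_ ?_ ?_).symm
  · intro p hp
    rw [mem_edgeFinset] at hp
    rw [mem_eF]
    induction p with
    | _ x y => exact hp
  · intro p hp q hq h
    exact Sym2.map.injective Subtype.val_injective h
  · intro p hp
    rw [mem_eF] at hp
    induction p with
    | _ x y =>
      have hadj : G.Adj x y := hp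
      refine ⟨s(⟨x, (hT x y hadj).1⟩, ⟨y, (hT x y hadj).2⟩), ?_, rfl⟩
      rw [mem_edgeFinset]
      exact hadj

/-- An acyclic graph with edges inside a nonempty `T` has at most `|T| - 1` edges,
with equality forcing mutual reachability of the vertices of `T`. -/
lemma forest_bound : ∀ (n : ℕ) (T : Finset α), T.card ≤ n →
    ∀ G : SimpleGraph α, G.IsAcyclic → (∀ x y, G.Adj x y → x ∈ T ∧ y ∈ T) → T.Nonempty →
    (eF G).card + 1 ≤ T.card ∧
      ((eF G).card + 1 = T.card → ∀ a ∈ T, ∀ b ∈ T, G.Reachable a b) := by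
  intro n
  induction n with
  | zero => intro T hT _ _ _ hne; exact absurd (Finset.card_pos.mpr hne) (by omega)
  | succ n ih =>
    intro T hTn G hac hT hne
    classical
    by_cases hcon : ∀ a ∈ T, ∀ b ∈ T, G.Reachable a b
    · exact ⟨le_of_eq (tree_count hac hT hne hcon), fun _ => hcon⟩
    · push_neg at hcon
      obtain ⟨a, ha, b, hb, hab⟩ := hcon
      set T1 := T.filter (fun x => G.Reachable a x) with hT1
      set T2 := T.filter (fun x => ¬ G.Reachable a x) with hT2
      have ha1 : a ∈ T1 := by simp [hT1, ha, Reachable.refl]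
      have hb2 : b ∈ T2 := by simp [hT2, hb, hab]
      have hsum : T1.card + T2.card = T.card :=
        Finset.card_filter_add_card_filter_not _
      have hc1 : T1.card < T.card := by
        have : T1.card ≤ T.card := Finset.card_le_card (Finset.filter_subset _ _)
        have h2pos : 0 < T2.card := Finset.card_pos.mpr ⟨b, hb2⟩
        omega
      have hc2 : T2.card < T.card := by
        have h1pos : 0 < T1.card := Finset.card_pos.mpr ⟨a, ha1⟩
        omega
      set G1 : SimpleGraph α :=
        { Adj := fun x y => G.Adj x y ∧ G.Reachable a x,
          symm := ⟨fun x y ⟨h, hr⟩ => ⟨h.symm, hr.trans h.reachable⟩⟩,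
          loopless := ⟨fun x ⟨h, _⟩ => G.irrefl h⟩ } with hG1
      set G2 : SimpleGraph α :=
        { Adj := fun x y => G.Adj x y ∧ ¬ G.Reachable a x,
          symm := ⟨fun x y ⟨h, hr⟩ => ⟨h.symm, fun hr' => hr (hr'.trans h.symm.reachable)⟩⟩,
          loopless := ⟨fun x ⟨h, _⟩ => G.irrefl h⟩ } with hG2
      have hle1 : G1 ≤ G := fun x y h => h.1
      have hle2 : G2 ≤ G := fun x y h => h.1
      have hT1' : ∀ x y, G1.Adj x y → x ∈ T1 ∧ y ∈ T1 := by
        rintro x y ⟨h, hr⟩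
        exact ⟨by simp [hT1, (hT x y h).1, hr], by simp [hT1, (hT x y h).2, hr.trans h.reachable]⟩
      have hT2' : ∀ x y, G2.Adj x y → x ∈ T2 ∧ y ∈ T2 := by
        rintro x y ⟨h, hr⟩
        refine ⟨by simp [hT2, (hT x y h).1, hr], ?_⟩
        have : ¬ G.Reachable a y := fun hr' => hr (hr'.trans h.symm.reachable)
        simp [hT2, (hT x y h).2, this]
      have h1 := (ih T1 (by omega) G1 (acyclic_anti hle1 hac) hT1' ⟨a, ha1⟩).1
      have h2 := (ih T2 (by omega) G2 (acyclic_anti hle2 hac) hT2' ⟨b, hb2⟩).1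
      have hunion : eF G = eF G1 ∪ eF G2 := by
        ext p
        induction p with
        | _ x y =>
          simp only [Finset.mem_union, mem_eF, mem_edgeSet]
          constructor
          · intro h
            by_cases hr : G.Reachable a x
            · exact Or.inl ⟨h, hr⟩
            · exact Or.inr ⟨h, hr⟩
          · rintro (⟨h, _⟩ | ⟨h, _⟩) <;> exact h
      have hdisj : Disjoint (eF G1) (eF G2) := by
        rw [Finset.disjoint_left]
        intro p hp1 hp2
        induction p with
        | _ x y =>
          rw [mem_eF, mem_edgeSet] at hp1 hp2
          exact hp2.2 hp1.2
      have hcards : (eF G).card = (eF G1).card + (eF G2).card := by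
        rw [hunion, Finset.card_union_of_disjoint hdisj]
      exact ⟨by omega, fun h => by omega⟩

end AuxGraph

/-! ### Auxiliary hypergraph lemmas -/

section AuxHyper

open SimpleGraph Finset

/-- the `v`-subgraph: edges of `F` both of whose endpoints contain `v`. -/
def Fv (F : SimpleGraph (Finset V)) (v : V) : SimpleGraph (Finset V) where
  Adj x y := F.Adj x y ∧ v ∈ x ∧ v ∈ y
  symm := ⟨fun x y ⟨h, hx, hy⟩ => ⟨h.symm, hy, hx⟩⟩
  loopless := ⟨fun x ⟨h, _⟩ => F.irrefl h⟩

lemma Fv_adj {F : SimpleGraph (Finset V)} {v : V} {x y : Finset V} :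
    (Fv F v).Adj x y ↔ F.Adj x y ∧ v ∈ x ∧ v ∈ y := Iff.rfl

lemma Fv_le {F : SimpleGraph (Finset V)} {v : V} : Fv F v ≤ F := fun _ _ h => h.1

lemma fweight_eq_sum (F : SimpleGraph (Finset V)) :
    fweight F = ∑ v : V, (eF (Fv F v)).card := by
  classical
  have h2 : ∀ p ∈ eF F, interWt p = ∑ v : V, (if (∀ x ∈ p, v ∈ x) then 1 else 0) := by
    intro p _
    induction p with
    | _ a b =>
      have h3 : interWt s(a, b) = (a ∩ b).card := rfl
      have h4 : Finset.univ.filter (fun v => ∀ x ∈ s(a, b), v ∈ x) = a ∩ b := by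
        ext v
        simp [Sym2.mem_iff, Finset.mem_inter]
      rw [h3, ← h4, Finset.card_filter]
  have h1 : fweight F = ∑ p ∈ eF F, interWt p := rfl
  rw [h1, Finset.sum_congr rfl h2, Finset.sum_comm]
  refine Finset.sum_congr rfl fun v _ => ?_
  rw [← Finset.card_filter]
  congr 1
  ext p
  induction p with
  | _ x y =>
    simp only [Finset.mem_filter, mem_eF, mem_edgeSet, Fv_adj, Sym2.mem_iff]
    constructor
    · rintro ⟨h, hv⟩
      exact ⟨h, hv x (Or.inl rfl), hv y (Or.inr rfl)⟩
    · rintro ⟨h, hx, hy⟩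
      refine ⟨h, ?_⟩
      rintro z (rfl | rfl) <;> assumption

lemma hweight_eq_univ (E : Finset (Finset V)) :
    hweight E = ∑ v : V, (hdeg E v - 1) := by
  rw [hweight]
  refine Finset.sum_filter_of_ne (fun v _ h => ?_)
  omega

lemma Fv_edges_in {E : Finset (Finset V)} {F : SimpleGraph (Finset V)}
    (hF : ∀ x y, F.Adj x y → x ∈ E ∧ y ∈ E) (v : V) :
    ∀ x y, (Fv F v).Adj x y →
      x ∈ E.filter (fun e => v ∈ e) ∧ y ∈ E.filter (fun e => v ∈ e) := by
  rintro x y ⟨h, hx, hy⟩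
  exact ⟨Finset.mem_filter.mpr ⟨(hF x y h).1, hx⟩, Finset.mem_filter.mpr ⟨(hF x y h).2, hy⟩⟩

lemma Fv_count_le {E : Finset (Finset V)} {F : SimpleGraph (Finset V)}
    (hac : F.IsAcyclic) (hF : ∀ x y, F.Adj x y → x ∈ E ∧ y ∈ E) (v : V) :
    (eF (Fv F v)).card ≤ hdeg E v - 1 := by
  classical
  by_cases hd : 1 ≤ hdeg E v
  · have hne : (E.filter (fun e => v ∈ e)).Nonempty := Finset.card_pos.mp hd
    have := (forest_bound (E.filter (fun e => v ∈ e)).card _ le_rfl (Fv F v)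
      (acyclic_anti Fv_le hac) (Fv_edges_in hF v) hne).1
    have hdeq : (E.filter (fun e => v ∈ e)).card = hdeg E v := rfl
    omega
  · have h0 : eF (Fv F v) = ∅ := by
      rw [Finset.eq_empty_iff_forall_notMem]
      intro p hp
      induction p with
      | _ x y =>
        rw [mem_eF, mem_edgeSet] at hp
        have := (Fv_edges_in hF v x y hp).1
        have : 1 ≤ hdeg E v := Finset.card_pos.mpr ⟨x, this⟩
        exact hd this
    simp [h0]

lemma Fv_reach_of_count {E : Finset (Finset V)} {F : SimpleGraph (Finset V)}
    (hac : F.IsAcyclic) (hF : ∀ x y, F.Adj x y → x ∈ E ∧ y ∈ E) (v : V)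
    (hd : 1 ≤ hdeg E v) (hcount : (eF (Fv F v)).card = hdeg E v - 1) :
    ∀ a ∈ E.filter (fun e => v ∈ e), ∀ b ∈ E.filter (fun e => v ∈ e),
      (Fv F v).Reachable a b := by
  classical
  have hne : (E.filter (fun e => v ∈ e)).Nonempty := Finset.card_pos.mp hd
  have hdeq : (E.filter (fun e => v ∈ e)).card = hdeg E v := rfl
  exact (forest_bound (E.filter (fun e => v ∈ e)).card _ le_rfl (Fv F v)
    (acyclic_anti Fv_le hac) (Fv_edges_in hF v) hne).2 (by omega)

lemma join_reach {E : Finset (Finset V)} {J : SimpleGraph (Finset V)}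
    (hJ : IsJoinForest E J) {G' : SimpleGraph (Finset V)} {e f : Finset V} {v : V}
    (he : e ∈ E) (hf : f ∈ E) (hve : v ∈ e) (hvf : v ∈ f)
    (htrans : ∀ x y, J.Adj x y → v ∈ x → v ∈ y → G'.Adj x y) :
    G'.Reachable e f := by
  classical
  obtain ⟨hre, hpath⟩ := hJ.2 e he f hf v hve hvf
  obtain ⟨p⟩ := hre
  exact reach_transfer htrans p.toPath.1 (hpath p.toPath.1 p.toPath.2)

lemma Fv_count_join {E : Finset (Finset V)} {J : SimpleGraph (Finset V)}
    (hJ : IsJoinForest E J) (v : V) :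
    (eF (Fv J v)).card = hdeg E v - 1 := by
  classical
  by_cases hd : 1 ≤ hdeg E v
  · have hne : (E.filter (fun e => v ∈ e)).Nonempty := Finset.card_pos.mp hd
    have hcon : ∀ a ∈ E.filter (fun e => v ∈ e), ∀ b ∈ E.filter (fun e => v ∈ e),
        (Fv J v).Reachable a b := by
      intro a ha b hb
      rw [Finset.mem_filter] at ha hb
      exact join_reach hJ ha.1 hb.1 ha.2 hb.2 (fun x y h hx hy => ⟨h, hx, hy⟩)
    have := tree_count (acyclic_anti Fv_le hJ.1.1) (Fv_edges_in hJ.1.2 v) hne hcon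
    have hdeq : (E.filter (fun e => v ∈ e)).card = hdeg E v := rfl
    omega
  · have h1 := Fv_count_le hJ.1.1 hJ.1.2 v
    omega

end AuxHyper

/-- **Lemma 3.1(b)**: if `H` is acyclic, then every maximum-weight spanning forest
of the weighted hyperedge graph `wg(H)` is a join forest of `H`. -/
theorem maxSpanningForest_isJoinForest_of_acyclic (E : Finset (Finset V))
    (hE : IsAcyclicHypergraph E) :
    ∀ S, IsMaxSpanningForest (wg E) S → IsJoinForest E S := by
  classical
  obtain ⟨J, hJ⟩ := hE
  intro S hS
  obtain ⟨⟨hle, hac, hreachS⟩, hmax⟩ := hS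
  have hSE : ∀ x y, S.Adj x y → x ∈ E ∧ y ∈ E := fun x y h => ⟨(hle h).1, (hle h).2.1⟩
  -- the spanning forest obtained from the join forest `J`
  set J' : SimpleGraph (Finset V) :=
    { Adj := fun e f => J.Adj e f ∧ (e ∩ f).Nonempty,
      symm := ⟨fun e f ⟨h, hi⟩ => ⟨h.symm, by rwa [Finset.inter_comm] at hi⟩⟩,
      loopless := ⟨fun e ⟨h, _⟩ => J.irrefl h⟩ } with hJ'def
  have hJ'leJ : J' ≤ J := fun x y h => h.1
  have hJ'le : J' ≤ wg E := by
    rintro x y ⟨h, hi⟩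
    exact ⟨(hJ.1.2 x y h).1, (hJ.1.2 x y h).2, h.ne, hi⟩
  have hkey : ∀ a b, (wg E).Reachable a b → J'.Reachable a b := by
    intro a b h
    obtain ⟨p⟩ := h
    induction p with
    | nil => rfl
    | cons h q ih =>
      obtain ⟨hx, hy, hne, w, hw⟩ := h
      rw [Finset.mem_inter] at hw
      have h1 : J'.Reachable _ _ := join_reach hJ hx hy hw.1 hw.2
        (fun x y hadj hxw hyw => ⟨hadj, ⟨w, Finset.mem_inter.mpr ⟨hxw, hyw⟩⟩⟩)
      exact h1.trans ih
  have hJ'sp : IsSpanningForest (wg E) J' :=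
    ⟨hJ'le, acyclic_anti hJ'leJ hJ.1.1,
      fun a b => ⟨fun h => h.mono hJ'le, fun h => hkey a b h⟩⟩
  have hFvJ : ∀ v : V, Fv J' v = Fv J v := by
    intro v
    ext x y
    constructor
    · rintro ⟨⟨h, _⟩, hx, hy⟩
      exact ⟨h, hx, hy⟩
    · rintro ⟨h, hx, hy⟩
      exact ⟨⟨h, ⟨v, Finset.mem_inter.mpr ⟨hx, hy⟩⟩⟩, hx, hy⟩
  have hwJ' : fweight J' = hweight E := by
    rw [fweight_eq_sum, hweight_eq_univ]
    refine Finset.sum_congr rfl fun v _ => ?_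
    rw [hFvJ v]
    exact Fv_count_join hJ v
  have hSle : ∀ v : V, (eF (Fv S v)).card ≤ hdeg E v - 1 := Fv_count_le hac hSE
  have h1 : fweight S ≤ hweight E := by
    rw [fweight_eq_sum, hweight_eq_univ]
    exact Finset.sum_le_sum (fun v _ => hSle v)
  have h2 : hweight E ≤ fweight S := hwJ' ▸ hmax J' hJ'sp
  have heq : fweight S = hweight E := le_antisymm h1 h2
  rw [fweight_eq_sum, hweight_eq_univ] at heq
  have hpt := (Finset.sum_eq_sum_iff_of_le (fun v _ => hSle v)).1 heq
  refine ⟨⟨hac, hSE⟩, ?_⟩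
  intro e he f hf v hve hvf
  have hd : 1 ≤ hdeg E v :=
    Finset.card_pos.mpr ⟨e, Finset.mem_filter.mpr ⟨he, hve⟩⟩
  have hre : (Fv S v).Reachable e f :=
    Fv_reach_of_count hac hSE v hd (hpt v (Finset.mem_univ v))
      e (Finset.mem_filter.mpr ⟨he, hve⟩) f (Finset.mem_filter.mpr ⟨hf, hvf⟩)
  refine ⟨hre.mono Fv_le, ?_⟩
  intro p hp g hg
  obtain ⟨q⟩ := hre
  have hsupv : ∀ z ∈ q.toPath.1.support, v ∈ z :=
    walk_support_prop (G := Fv S v) (P := fun z => v ∈ z)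
      (fun x y h => ⟨h.2.1, h.2.2⟩) q.toPath.1 hve
  have hq2 : (q.toPath.1.mapLe (Fv_le (F := S) (v := v))).IsPath :=
    q.toPath.2.mapLe _
  have hpq := hac.path_unique ⟨p, hp⟩ ⟨q.toPath.1.mapLe Fv_le, hq2⟩
  have hps : p.support = q.toPath.1.support := by
    have h' : p = q.toPath.1.mapLe Fv_le := congrArg Subtype.val hpq
    rw [h']
    simp only [SimpleGraph.Walk.mapLe, SimpleGraph.Walk.support_map,
      SimpleGraph.Hom.ofLE]
    exact List.map_id' _
  rw [hps] at hg
  exact hsupv g hg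
end

section
/- If J is a join forest of a hypergraph H, then the weight of J equals the weight w(H) of H. -/
/-!
Lemma 3.1(a) (Bernstein–Goodman): a hypergraph `H` is acyclic iff the weight `w(H)`
equals the weight of a maximum-weight spanning forest of the weighted hyperedge
graph `wg(H)`.

A hypergraph on a finite vertex type `V` is given by its finite set `E` of
hyperedges, each a `Finset V`.
-/

variable {V : Type*} [Fintype V] [DecidableEq V]

section AuxWalk
variable {W : Type*}

lemma mem_support_cases' {G : SimpleGraph W} {a b : W} (p : G.Walk a b) :
    ∀ g ∈ p.support, g = a ∨ ∃ h, G.Adj h g := by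
  induction p with
  | nil => intro g hg; left; simpa using hg
  | cons h q ih =>
    intro g hg
    rw [SimpleGraph.Walk.support_cons] at hg
    rcases List.mem_cons.1 hg with rfl | hg
    · exact Or.inl rfl
    · rcases ih g hg with rfl | h'
      · exact Or.inr ⟨_, h⟩
      · exact Or.inr h'

lemma reachable_induce' {G : SimpleGraph W} {s : Set W} {b : W} :
    ∀ {a : W} (p : G.Walk a b) (ha : a ∈ s) (hb : b ∈ s),
    (∀ g ∈ p.support, g ∈ s) → (G.induce s).Reachable ⟨a, ha⟩ ⟨b, hb⟩ := by
  intro a p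
  induction p with
  | nil => intro ha hb _; rfl
  | cons h q ih =>
    intro ha hb hs
    have hc := hs _ (by rw [SimpleGraph.Walk.support_cons]; exact List.mem_cons_of_mem _ q.start_mem_support)
    exact (SimpleGraph.Adj.reachable (by exact h)).trans
      (ih hc hb (fun g hg => hs g (by simp [hg])))

end AuxWalk

/-- If `J` is a join forest of a hypergraph `H`, then the weight of `J` equals
the weight `w(H)` of `H`. -/
theorem joinForest_weight_eq_hweight (E : Finset (Finset V)) (J : SimpleGraph (Finset V))
    (hJ : IsJoinForest E J) :
    fweight J = hweight E := by
  classical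
  set F := (Set.toFinite J.edgeSet).toFinset with hF
  -- membership in the relevant sets
  have hmemF : ∀ p, p ∈ F ↔ p ∈ J.edgeSet := fun p => Set.Finite.mem_toFinset _
  -- Step 1: fweight J = ∑ v, (F.filter (fun p => ∀ a ∈ p, v ∈ a)).card
  have hinter : ∀ p ∈ F, interWt p =
      (Finset.univ.filter (fun v : V => ∀ a ∈ p, v ∈ a)).card := by
    intro p _
    induction p with
    | _ a b =>
      show (a ∩ b).card = _
      congr 1
      ext v
      simp [Sym2.mem_iff, forall_eq_or_imp]
  have step1 : fweight J =
      ∑ v : V, (F.filter (fun p => ∀ a ∈ p, v ∈ a)).card := by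
    rw [fweight, Finset.sum_congr rfl hinter]
    simp only [Finset.card_filter]
    exact Finset.sum_comm
  rw [step1]
  -- Step 2: hweight E = ∑ v, (hdeg E v - 1)
  have step2 : hweight E = ∑ v : V, (hdeg E v - 1) := by
    rw [hweight]
    refine Finset.sum_subset (Finset.filter_subset _ _) ?_
    intro v _ hv
    simp only [Finset.mem_filter, Finset.mem_univ, true_and, not_le, Nat.lt_one_iff] at hv
    simp [hv]
  rw [step2]
  -- Step 3: pointwise equality
  refine Finset.sum_congr rfl (fun v _ => ?_)
  by_cases hv : hdeg E v = 0
  · -- no hyperedge contains v, so no edge of J has v in both endpoints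
    rw [hv]
    simp only [Nat.zero_sub, Finset.card_eq_zero]
    rw [Finset.filter_eq_empty_iff]
    intro p hp
    rw [hmemF] at hp
    induction p with
    | _ a b =>
      intro hall
      have hadj : J.Adj a b := hp
      have haE : a ∈ E := (hJ.1.2 a b hadj).1
      have hva : v ∈ a := hall a (Sym2.mem_mk_left a b)
      have : a ∈ E.filter (fun e => v ∈ e) := Finset.mem_filter.2 ⟨haE, hva⟩
      exact absurd (Finset.card_pos.2 ⟨a, this⟩) (by rw [hdeg] at hv; omega)
  · -- v is in at least one hyperedge: induced graph on hyperedges containing v is a tree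
    set t : Finset (Finset V) := E.filter (fun e => v ∈ e) with ht
    set s : Set (Finset V) := ↑t with hs
    have hmem_s : ∀ g, g ∈ s ↔ g ∈ E ∧ v ∈ g := by
      intro g; simp [hs, ht]
    -- the induced graph is acyclic
    have hacyc : (J.induce s).IsAcyclic := by
      intro x c hc
      exact hJ.1.1 _ (hc.map (f := (SimpleGraph.Embedding.induce (G := J) s).toHom)
        (SimpleGraph.Embedding.induce (G := J) s).injective)
    -- the induced graph is connected
    have hne : s.Nonempty := by
      obtain ⟨a, ha⟩ := Finset.card_pos.1 (Nat.pos_of_ne_zero hv)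
      exact ⟨a, by rw [hmem_s]; exact Finset.mem_filter.1 ha⟩
    have hconn : (J.induce s).Connected := by
      rw [SimpleGraph.connected_iff]
      refine ⟨?_, ?_⟩
      · rintro ⟨x, hx⟩ ⟨y, hy⟩
        obtain ⟨hxE, hxv⟩ := (hmem_s x).1 hx
        obtain ⟨hyE, hyv⟩ := (hmem_s y).1 hy
        obtain ⟨hreach, hpath⟩ := hJ.2 x hxE y hyE v hxv hyv
        obtain ⟨w⟩ := hreach
        have hwp := w.toPath
        have hsupp : ∀ g ∈ (w.toPath : J.Walk x y).support, g ∈ s := by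
          intro g hg
          have hgv : v ∈ g := hpath _ w.toPath.2 g hg
          have hgE : g ∈ E := by
            rcases mem_support_cases' _ g hg with rfl | ⟨h, hadj⟩
            · exact hxE
            · exact (hJ.1.2 h g hadj).2
          rw [hmem_s]; exact ⟨hgE, hgv⟩
        exact reachable_induce' _ hx hy hsupp
      · exact ⟨⟨hne.choose, hne.choose_spec⟩⟩
    have htree : (J.induce s).IsTree := ⟨hconn, hacyc⟩
    have hcard : (J.induce s).edgeFinset.card + 1 = Fintype.card s :=
      htree.card_edgeFinset
    have hcards : Fintype.card s = hdeg E v := by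
      rw [hdeg, ← ht]
      simp [hs, Set.Finite.card_toFinset]
    -- bijection between edges of the induced graph and edges of J inside s
    have hbij : (F.filter (fun p => ∀ a ∈ p, v ∈ a)).card =
        (J.induce s).edgeFinset.card := by
      refine (Finset.card_bij (fun p _ => Sym2.map Subtype.val p) ?_ ?_ ?_).symm
      · intro p hp
        rw [SimpleGraph.mem_edgeFinset] at hp
        induction p with
        | _ x y =>
          have hadj : (J.induce s).Adj x y := hp
          rw [Finset.mem_filter]
          refine ⟨(hmemF _).2 ?_, ?_⟩
          · exact hadj
          · intro a ha
            simp only [Sym2.map_pair_eq, Sym2.mem_iff] at ha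
            rcases ha with rfl | rfl
            · exact ((hmem_s _).1 x.2).2
            · exact ((hmem_s _).1 y.2).2
      · intro p hp q hq hpq
        exact Sym2.map.injective Subtype.val_injective hpq
      · intro q hq
        rw [Finset.mem_filter, hmemF] at hq
        obtain ⟨hqE, hqv⟩ := hq
        induction q with
        | _ x y =>
          have hadj : J.Adj x y := hqE
          have hx : x ∈ s := (hmem_s x).2 ⟨(hJ.1.2 x y hadj).1, hqv x (Sym2.mem_mk_left x y)⟩
          have hy : y ∈ s := (hmem_s y).2 ⟨(hJ.1.2 x y hadj).2, hqv y (Sym2.mem_mk_right x y)⟩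
          refine ⟨s(⟨x, hx⟩, ⟨y, hy⟩), ?_, ?_⟩
          · rw [SimpleGraph.mem_edgeFinset]
            exact hadj
          · simp [Sym2.map_pair_eq]
    rw [hbij]
    omega
end
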